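/- arXiv:2502.06455 — 2 statements merged into one kernel-verified Lean document; each statement's English description precedes it below -/
import Mathlib

section
/- Let H be a real Hilbert space, d a bounded coercive bilinear form on H with coercivity constant δ, c a bounded trilinear form with |c(v;ψ,φ)| ≤ C²‖v‖‖ψ‖‖φ‖ and c(v;φ,φ) = 0, and κ̃ a monotone map H → H'. For û₁, û₂ ∈ H let ψᵢ solve ⟨κ̃(ψᵢ), φ⟩ + c(ûᵢ; ψᵢ, φ) + d(ψᵢ, φ) = G(φ) for all φ ∈ H. Then ‖ψ₁ − ψ₂‖ ≤ (C²/δ)·‖ψ₂‖·‖û₁ − û₂‖. -/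
open NormedSpace

theorem lipschitz_continuity_elec_operator
    {H : Type*} [NormedAddCommGroup H] [InnerProductSpace ℝ H] [CompleteSpace H]
    (c : H →ₗ[ℝ] H →ₗ[ℝ] H →ₗ[ℝ] ℝ) (d : H →ₗ[ℝ] H →ₗ[ℝ] ℝ)
    (κ : H → StrongDual ℝ H) (G : StrongDual ℝ H) (C δ Md : ℝ) (hδ : 0 < δ)
    (hd_bdd : ∀ ψ φ : H, |d ψ φ| ≤ Md * ‖ψ‖ * ‖φ‖)
    (hd_coer : ∀ φ : H, δ * ‖φ‖ ^ 2 ≤ d φ φ)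
    (hc_bdd : ∀ v ψ φ : H, |c v ψ φ| ≤ C ^ 2 * ‖v‖ * ‖ψ‖ * ‖φ‖)
    (hc_skew : ∀ v φ : H, c v φ φ = 0)
    (hκ_mono : ∀ ψ₁ ψ₂ : H, 0 ≤ (κ ψ₁ - κ ψ₂) (ψ₁ - ψ₂))
    (uhat₁ uhat₂ ψ₁ ψ₂ : H)
    (h₁ : ∀ φ : H, (κ ψ₁) φ + c uhat₁ ψ₁ φ + d ψ₁ φ = G φ)
    (h₂ : ∀ φ : H, (κ ψ₂) φ + c uhat₂ ψ₂ φ + d ψ₂ φ = G φ) :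
    ‖ψ₁ - ψ₂‖ ≤ (C ^ 2 / δ) * ‖ψ₂‖ * ‖uhat₁ - uhat₂‖ := by
  set φ := ψ₁ - ψ₂ with hφ
  have key : d φ φ = -((κ ψ₁ - κ ψ₂) φ) - c (uhat₁ - uhat₂) ψ₂ φ := by
    have e1 := h₁ φ
    have e2 := h₂ φ
    have hsplit : c uhat₁ ψ₁ φ = c uhat₁ ψ₂ φ + c uhat₁ φ φ := by
      have : (ψ₁ : H) = ψ₂ + φ := by simp [hφ]
      rw [this]; simp
    simp only [hφ, map_sub, LinearMap.sub_apply, ContinuousLinearMap.sub_apply] at *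
    have s5 : c uhat₁ (ψ₁ - ψ₂) (ψ₁ - ψ₂) = 0 := hc_skew _ _
    simp only [map_sub, LinearMap.sub_apply] at s5
    have s1 := hc_skew uhat₁ ψ₁
    have s2 := hc_skew uhat₂ ψ₂
    have s3 := hc_skew uhat₁ ψ₂
    have s4 := hc_skew uhat₂ ψ₁
    linarith
  have hbound : δ * ‖φ‖ ^ 2 ≤ C ^ 2 * ‖uhat₁ - uhat₂‖ * ‖ψ₂‖ * ‖φ‖ := by
    calc δ * ‖φ‖ ^ 2 ≤ d φ φ := hd_coer φ
      _ = -((κ ψ₁ - κ ψ₂) φ) - c (uhat₁ - uhat₂) ψ₂ φ := key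
      _ ≤ -c (uhat₁ - uhat₂) ψ₂ φ := by
          have := hκ_mono ψ₁ ψ₂
          simp only [hφ] at *
          linarith
      _ ≤ |c (uhat₁ - uhat₂) ψ₂ φ| := neg_le_abs _
      _ ≤ C ^ 2 * ‖uhat₁ - uhat₂‖ * ‖ψ₂‖ * ‖φ‖ := hc_bdd _ _ _
  rcases eq_or_lt_of_le (norm_nonneg φ) with h0 | h0
  · rw [← h0]
    positivity
  · have h1 : δ * ‖φ‖ ≤ C ^ 2 * ‖uhat₁ - uhat₂‖ * ‖ψ₂‖ := by
      nlinarith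
    rw [div_mul_eq_mul_div, div_mul_eq_mul_div, le_div_iff₀ hδ]
    nlinarith
end

section
/- Let V, Q be real Hilbert spaces, a a bounded bilinear form on V that is coercive on V with constant γ, b a bounded bilinear form on V × Q satisfying the inf-sup condition sup_{v≠0} b(v,q)/‖v‖ ≥ β‖q‖ for all q ∈ Q. Then for every F ∈ V' there is a unique (u, p) ∈ V × Q with a(u,v) + b(v,p) = F(v) for all v ∈ V and b(u,q) = 0 for all q ∈ Q; moreover ‖u‖ ≤ ‖F‖/γ. -/
open NormedSpace


set_option maxHeartbeats 2000000 in
theorem babuska_brezzi_wellposedness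
    {V Q : Type*} [NormedAddCommGroup V] [InnerProductSpace ℝ V] [CompleteSpace V]
    [NormedAddCommGroup Q] [InnerProductSpace ℝ Q] [CompleteSpace Q]
    (a : V →ₗ[ℝ] V →ₗ[ℝ] ℝ) (b : V →ₗ[ℝ] Q →ₗ[ℝ] ℝ)
    (Ma Mb γ β : ℝ) (hγ : 0 < γ) (hβ : 0 < β)
    (ha_bdd : ∀ u v : V, |a u v| ≤ Ma * ‖u‖ * ‖v‖)
    (ha_coer : ∀ v : V, γ * ‖v‖ ^ 2 ≤ a v v)
    (hb_bdd : ∀ (v : V) (q : Q), |b v q| ≤ Mb * ‖v‖ * ‖q‖)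
    (hb_infsup : ∀ q : Q, ∀ cst : ℝ, (∀ v : V, b v q ≤ cst * ‖v‖) → β * ‖q‖ ≤ cst)
    (F : StrongDual ℝ V) :
    (∃! up : V × Q, (∀ v : V, a up.1 v + b v up.2 = F v) ∧ (∀ q : Q, b up.1 q = 0)) ∧
    (∀ (u : V) (p : Q), (∀ v : V, a u v + b v p = F v) → (∀ q : Q, b u q = 0) →
      ‖u‖ ≤ ‖F‖ / γ) := by
  classical
  -- continuous versions of the bilinear forms
  set aC : V →L[ℝ] V →L[ℝ] ℝ :=
    LinearMap.mkContinuous₂ a Ma (fun u v => by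
      simpa [Real.norm_eq_abs] using ha_bdd u v) with haC
  set bC : V →L[ℝ] Q →L[ℝ] ℝ :=
    LinearMap.mkContinuous₂ b Mb (fun v q => by
      simpa [Real.norm_eq_abs] using hb_bdd v q) with hbC
  have haC_apply : ∀ u v : V, aC u v = a u v := fun u v => rfl
  have hbC_apply : ∀ (v : V) (q : Q), bC v q = b v q := fun v q => rfl
  -- the operator B : Q → V representing b
  set B : Q →L[ℝ] V :=
    ((InnerProductSpace.toDual ℝ V).symm.toContinuousLinearEquiv.toContinuousLinearMap).comp
      bC.flip with hBdef
  have hB : ∀ (q : Q) (v : V), (inner ℝ (B q) v : ℝ) = b v q := by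
    intro q v
    simp [hBdef, InnerProductSpace.toDual_symm_apply]
    rfl
  -- B is bounded below
  have hBbelow : ∀ q : Q, β * ‖q‖ ≤ ‖B q‖ := by
    intro q
    refine hb_infsup q ‖B q‖ fun v => ?_
    rw [← hB q v]
    exact real_inner_le_norm (B q) v
  have hBanti : AntilipschitzWith (⟨β⁻¹, by positivity⟩ : NNReal) B := by
    refine ContinuousLinearMap.antilipschitz_of_bound B fun q => ?_
    show ‖q‖ ≤ β⁻¹ * ‖B q‖
    exact (le_inv_mul_iff₀ hβ).2 (hBbelow q)
  set R : Submodule ℝ V := LinearMap.range (B : Q →ₗ[ℝ] V) with hRdef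
  have hRclosed : IsClosed (R : Set V) := by
    have := hBanti.isClosed_range B.uniformContinuous
    simpa [hRdef, LinearMap.coe_range] using this
  haveI : CompleteSpace R := hRclosed.completeSpace_coe
  set Z : Submodule ℝ V := Rᗮ with hZdef
  have hZmem : ∀ u : V, u ∈ Z ↔ ∀ q : Q, b u q = 0 := by
    intro u
    rw [hZdef, Submodule.mem_orthogonal]
    constructor
    · intro h q
      rw [← hB q u]
      exact h (B q) (LinearMap.mem_range_self (B : Q →ₗ[ℝ] V) q)
    · rintro h x ⟨q, rfl⟩
      exact (hB q u).trans (h q)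
  haveI : CompleteSpace Z := (Submodule.isClosed_orthogonal R).completeSpace_coe
  -- the restricted form on Z and Lax-Milgram
  set aZ : Z →L[ℝ] Z →L[ℝ] ℝ := ((aC.comp Z.subtypeL).flip.comp Z.subtypeL).flip with haZ
  have haZ_apply : ∀ u v : Z, aZ u v = a (u : V) (v : V) := fun u v => rfl
  have coer : IsCoercive aZ := by
    refine ⟨γ, hγ, fun u => ?_⟩
    have h1 := ha_coer (u : V)
    have h2 : ‖u‖ = ‖(u : V)‖ := rfl
    rw [haZ_apply u u, h2, mul_assoc, ← pow_two]
    exact h1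
  set equiv := coer.continuousLinearEquivOfBilin with hequiv
  set FZ : StrongDual ℝ Z := F.comp Z.subtypeL with hFZ
  set u0Z : Z := equiv.symm ((InnerProductSpace.toDual ℝ Z).symm FZ) with hu0Z
  have hu0 : ∀ w : Z, a (u0Z : V) (w : V) = F (w : V) := by
    intro w
    have h1 : (inner ℝ (equiv u0Z) w : ℝ) = aZ u0Z w := coer.continuousLinearEquivOfBilin_apply u0Z w
    rw [hu0Z, ContinuousLinearEquiv.apply_symm_apply, InnerProductSpace.toDual_symm_apply] at h1
    have : FZ w = F (w : V) := rfl
    rw [this] at h1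
    rw [← haZ_apply u0Z w, ← h1]
  set u0 : V := (u0Z : V) with hu0def
  have hbu0 : ∀ q : Q, b u0 q = 0 := (hZmem u0).mp u0Z.2
  -- find the pressure p
  set G : V →L[ℝ] ℝ := (F : V →L[ℝ] ℝ) - aC u0 with hG
  set g : V := (InnerProductSpace.toDual ℝ V).symm G with hg
  have hgip : ∀ v : V, (inner ℝ g v : ℝ) = F v - a u0 v := by
    intro v
    rw [hg, InnerProductSpace.toDual_symm_apply]
    rfl
  have hgZ : g ∈ Zᗮ := by
    rw [Submodule.mem_orthogonal]
    intro w hw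
    rw [real_inner_comm, hgip w, hu0 ⟨w, hw⟩]
    ring
  have hgR : g ∈ R := by
    rw [hZdef, Submodule.orthogonal_orthogonal] at hgZ
    exact hgZ
  obtain ⟨p, hp⟩ := hgR
  have hbp : ∀ v : V, b v p = F v - a u0 v := by
    intro v
    rw [← hB p v, show B p = g from hp, hgip v]
  have hsol1 : ∀ v : V, a u0 v + b v p = F v := by
    intro v; rw [hbp v]; ring
  clear haC hbC hBdef hRdef hZdef haZ hequiv hFZ hu0Z hu0def hG hg
  clear_value aC bC B R Z aZ equiv FZ u0Z u0 G g
  constructor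
  · refine ⟨(u0, p), ⟨hsol1, hbu0⟩, ?_⟩
    rintro ⟨u', p'⟩ ⟨h1', h2'⟩
    dsimp only at h1' h2'
    -- uniqueness
    have hdZ : ∀ q : Q, b (u' - u0) q = 0 := by
      intro q; simp [map_sub, h2' q, hbu0 q]
    have had : a (u' - u0) (u' - u0) = 0 := by
      have e1 := h1' (u' - u0)
      have e2 := hsol1 (u' - u0)
      have e3 : b (u' - u0) p' = 0 := hdZ p'
      have e4 : b (u' - u0) p = 0 := hdZ p
      have : a u' (u' - u0) = a u0 (u' - u0) := by
        have := h1' (u' - u0); have := hsol1 (u' - u0)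
        linarith [h1' (u' - u0), hsol1 (u' - u0), e3, e4]
      calc a (u' - u0) (u' - u0) = a u' (u' - u0) - a u0 (u' - u0) := by
            simp only [map_sub, LinearMap.sub_apply]; ring
        _ = 0 := by rw [this]; ring
    have hu : u' = u0 := by
      have := ha_coer (u' - u0)
      rw [had] at this
      have hn : ‖u' - u0‖ = 0 := by
        have hx : ‖u' - u0‖ ^ 2 ≤ 0 := by nlinarith
        exact pow_eq_zero_iff two_ne_zero |>.mp (le_antisymm hx (sq_nonneg _))
      rw [sub_eq_zero.mp (norm_eq_zero.mp hn)]
    have hpq : p' = p := by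
      have hb0 : ∀ v : V, b v (p' - p) = 0 := by
        intro v
        have e1 := h1' v
        have e2 := hsol1 v
        rw [hu] at e1
        have : b v p' = b v p := by linarith
        simp [map_sub, this]
      have := hb_infsup (p' - p) 0 (fun v => by rw [hb0 v]; simp)
      have hn : ‖p' - p‖ = 0 := le_antisymm (by nlinarith) (norm_nonneg _)
      exact sub_eq_zero.mp (norm_eq_zero.mp hn)
    exact Prod.ext hu hpq
  · intro u p' h1 h2
    have h3 : γ * ‖u‖ ^ 2 ≤ ‖F‖ * ‖u‖ := by
      have e1 := h1 u
      have e2 := h2 p'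
      have e3 : a u u = F u := by linarith
      have e4 : F u ≤ ‖F‖ * ‖u‖ := by
        calc F u ≤ |F u| := le_abs_self _
          _ = ‖F u‖ := (Real.norm_eq_abs _).symm
          _ ≤ ‖F‖ * ‖u‖ := F.le_opNorm u
      linarith [ha_coer u]
    rcases eq_or_lt_of_le (norm_nonneg u) with h | h
    · rw [← h]; positivity
    · rw [le_div_iff₀ hγ]
      nlinarith [h3]
end
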